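/- Consider the ODE system s_i'(t) = −(1/y_i) F(s(t)) x(t) for i = 1,…,n and x'(t) = (−D + F(s(t))) x(t) with initial condition (s(0), x(0)) in the open positive cone ℝ₊^{n+1} and x(0) > 0. Then there exists t_* ≥ 0 such that F(s(t)) < D for all t ≥ t_*. (In particular x'(t) < 0 for all t ≥ t_*, so x decays at least exponentially after time t_*.) -/

import Mathlib

open Filter Set Topology

noncomputable section

/-- Hypotheses on the uptake function `F`: Lipschitz on the closed positive cone,
vanishing when some nutrient is exhausted, positive on the open positive cone, and
strictly increasing in each argument on the positive cone. -/
def FHyp {n : ℕ} (F : (Fin n → ℝ) → ℝ) : Prop :=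
  (∃ K : NNReal, LipschitzOnWith K F {s : Fin n → ℝ | ∀ i, 0 ≤ s i}) ∧
  (∀ s : Fin n → ℝ, (∀ i, 0 ≤ s i) → (∃ i, s i = 0) → F s = 0) ∧
  (∀ s : Fin n → ℝ, (∀ i, 0 < s i) → 0 < F s) ∧
  (∀ s : Fin n → ℝ, (∀ i, 0 < s i) → ∀ i : Fin n, ∀ ε : ℝ, 0 < ε →
    F s < F (Function.update s i (s i + ε)))

/-- The component Lyapunov-like function `V_i(s) = y₁(s₁ⁱⁿ - s₁) - y_i(s_iⁱⁿ - s_i)`. -/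
def Vfun {n : ℕ} [NeZero n] (y sIn : Fin n → ℝ) (i : Fin n) (s : Fin n → ℝ) : ℝ :=
  y 0 * (sIn 0 - s 0) - y i * (sIn i - s i)

/-- `V̄_i = y₁(s₁ⁱⁿ - s̄₁) - y_i s_iⁱⁿ`. -/
def Vbar {n : ℕ} [NeZero n] (y sIn : Fin n → ℝ) (sbar1 : ℝ) (i : Fin n) : ℝ :=
  y 0 * (sIn 0 - sbar1) - y i * sIn i

/-- `Ω₀ = {s ∈ ℝⁿ₊ : s₁ ≥ s̄₁, V_i(s) < V̄_i for at least one i = 2,…,n}`. -/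
def Omega0 {n : ℕ} [NeZero n] (y sIn : Fin n → ℝ) (sbar1 : ℝ) : Set (Fin n → ℝ) :=
  {s | (∀ i, 0 < s i) ∧ sbar1 ≤ s 0 ∧ ∃ i, i ≠ 0 ∧ Vfun y sIn i s < Vbar y sIn sbar1 i}

/-- `Ω₁ = {s ∈ ℝⁿ₊ : s₁ ≥ s̄₁, V_i(s) > V̄_i for all i = 2,…,n}`. -/
def Omega1 {n : ℕ} [NeZero n] (y sIn : Fin n → ℝ) (sbar1 : ℝ) : Set (Fin n → ℝ) :=
  {s | (∀ i, 0 < s i) ∧ sbar1 ≤ s 0 ∧ ∀ i, i ≠ 0 → Vbar y sIn sbar1 i < Vfun y sIn i s}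

/-- `φ_ν(s⁰) = s⁰ - ν y₁ (s₁⁰ - s̄₁) Y`, with `Y = (1/y₁, …, 1/yₙ)`. -/
def phiNu {n : ℕ} [NeZero n] (y : Fin n → ℝ) (sbar1 ν : ℝ) (s0 : Fin n → ℝ) : Fin n → ℝ :=
  fun i => s0 i - ν * (y 0 * (s0 0 - sbar1)) * (1 / y i)

/-- `I(s⁰) = y₁ (s₁⁰ - s̄₁) ∫₀¹ (1 - D / F(φ_ν(s⁰))) dν`, the net biomass change over one cycle. -/
def Ifun {n : ℕ} [NeZero n] (F : (Fin n → ℝ) → ℝ) (D : ℝ) (y : Fin n → ℝ)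
    (sbar1 : ℝ) (s0 : Fin n → ℝ) : ℝ :=
  y 0 * (s0 0 - sbar1) * ∫ ν in (0:ℝ)..1, (1 - D / F (phiNu y sbar1 ν s0))

/-- `ŝ⁺(r) = sⁱⁿ - (1 - r) y₁ (s₁ⁱⁿ - s̄₁) Y`. -/
def shatP {n : ℕ} [NeZero n] (y sIn : Fin n → ℝ) (sbar1 r : ℝ) : Fin n → ℝ :=
  fun i => sIn i - (1 - r) * (y 0 * (sIn 0 - sbar1)) * (1 / y i)

/-- `μ(r) = y₁ (s̄₁⁺ - s̄₁) ∫₀¹ (1 - D / F(φ_ν(ŝ⁺(r)))) dν`, where `s̄₁⁺ = r s₁ⁱⁿ + (1-r) s̄₁`. -/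
def muFun {n : ℕ} [NeZero n] (F : (Fin n → ℝ) → ℝ) (D : ℝ) (y sIn : Fin n → ℝ)
    (sbar1 r : ℝ) : ℝ :=
  y 0 * ((r * sIn 0 + (1 - r) * sbar1) - sbar1) *
    ∫ ν in (0:ℝ)..1, (1 - D / F (phiNu y sbar1 ν (shatP y sIn sbar1 r)))

/-- `Γ_ρ⁺ = {s ∈ ℝⁿ₊ : s₁ = s̄₁⁺, V_i(s) > -ρ for all i = 2,…,n}`. -/
def GammaRho {n : ℕ} [NeZero n] (y sIn : Fin n → ℝ) (sbar1 r ρ : ℝ) : Set (Fin n → ℝ) :=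
  {s | (∀ i, 0 < s i) ∧ s 0 = r * sIn 0 + (1 - r) * sbar1 ∧
    ∀ i, i ≠ 0 → -ρ < Vfun y sIn i s}

/-- `Ω^ρ = {s ∈ Ω₁ : V_i(s) > -ρ for all i = 2,…,n}`. -/
def OmegaRho {n : ℕ} [NeZero n] (y sIn : Fin n → ℝ) (sbar1 ρ : ℝ) : Set (Fin n → ℝ) :=
  {s | s ∈ Omega1 y sIn sbar1 ∧ ∀ i, i ≠ 0 → -ρ < Vfun y sIn i s}

/-- The cycle map `s ↦ g(φ₁(s)) = r sⁱⁿ + (1 - r) φ₁(s)`. -/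
def cycMap {n : ℕ} [NeZero n] (y sIn : Fin n → ℝ) (sbar1 r : ℝ)
    (s : Fin n → ℝ) : Fin n → ℝ :=
  fun i => r * sIn i + (1 - r) * phiNu y sbar1 1 s i

/-- A (right-continuous) solution of the impulsive self-cycling fermentation model
`eq:model`: between impulse times the ODEs hold, impulse times are exactly the times
where the left limit of `s₁` equals the threshold `s̄₁`, and at an impulse time the
state jumps according to the decanting/refilling map. -/
structure SCFSol (n : ℕ) [NeZero n] (F : (Fin n → ℝ) → ℝ) (D : ℝ) (y : Fin n → ℝ)
    (r : ℝ) (sIn : Fin n → ℝ) (sbar1 : ℝ) where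
  /-- nutrient concentrations -/
  s : ℝ → Fin n → ℝ
  /-- biomass concentration -/
  x : ℝ → ℝ
  /-- the set of impulse times -/
  T : Set ℝ
  /-- left limits of `s` (meaningful at impulse times) -/
  sLim : ℝ → Fin n → ℝ
  /-- left limit of `x` (meaningful at impulse times) -/
  xLim : ℝ → ℝ
  T_pos : ∀ t ∈ T, 0 < t
  init : sbar1 < s 0 0
  ode_s : ∀ t : ℝ, 0 ≤ t → t ∉ T → ∀ i,
    HasDerivAt (fun τ => s τ i) (-(1 / y i) * F (s t) * x t) t
  ode_x : ∀ t : ℝ, 0 ≤ t → t ∉ T →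
    HasDerivAt x ((-D + F (s t)) * x t) t
  left_s : ∀ t ∈ T, ∀ i,
    Filter.Tendsto (fun τ => s τ i) (nhdsWithin t (Set.Iio t)) (nhds (sLim t i))
  left_x : ∀ t ∈ T, Filter.Tendsto x (nhdsWithin t (Set.Iio t)) (nhds (xLim t))
  hit : ∀ t ∈ T, sLim t 0 = sbar1
  exact_hit : ∀ t : ℝ, 0 < t → t ∉ T → s t 0 ≠ sbar1
  jump_s : ∀ t ∈ T, ∀ i, s t i = r * sIn i + (1 - r) * sLim t i
  jump_x : ∀ t ∈ T, x t = (1 - r) * xLim t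

/-- Convergence of a solution to the unique periodic orbit: there are infinitely many
impulses and, along the (increasing) enumeration of the impulse times, the post-impulse
nutrient states converge to `ŝ⁺(r)`, the post-impulse biomass converges to
`((1-r)/r) μ(r)`, and the pre-impulse biomass converges to `(1/r) μ(r)`. -/
def ConvergesToPeriodic {n : ℕ} [NeZero n] {F : (Fin n → ℝ) → ℝ} {D : ℝ}
    {y : Fin n → ℝ} {r : ℝ} {sIn : Fin n → ℝ} {sbar1 : ℝ}
    (sol : SCFSol n F D y r sIn sbar1) : Prop :=
  sol.T.Infinite ∧
  ∀ tk : ℕ → ℝ, StrictMono tk → Set.range tk = sol.T →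
    (∀ i, Filter.Tendsto (fun k => sol.s (tk k) i) Filter.atTop
      (nhds (shatP y sIn sbar1 r i))) ∧
    Filter.Tendsto (fun k => sol.x (tk k)) Filter.atTop
      (nhds ((1 - r) / r * muFun F D y sIn sbar1 r)) ∧
    Filter.Tendsto (fun k => sol.xLim (tk k)) Filter.atTop
      (nhds (1 / r * muFun F D y sIn sbar1 r))

namespace SCFaux

variable {n : ℕ} {F : (Fin n → ℝ) → ℝ}

lemma FHyp.nonneg (hF : FHyp F) {a : Fin n → ℝ} (ha : ∀ i, 0 ≤ a i) : 0 ≤ F a := by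
  by_cases h : ∀ i, 0 < a i
  · exact (hF.2.2.1 a h).le
  · push_neg at h
    obtain ⟨i, hi⟩ := h
    exact le_of_eq (hF.2.1 a ha ⟨i, le_antisymm hi (ha i)⟩).symm

lemma FHyp.le_K_mul (hF : FHyp F) {K : NNReal}
    (hK : LipschitzOnWith K F {s : Fin n → ℝ | ∀ i, 0 ≤ s i})
    {a : Fin n → ℝ} (ha : ∀ i, 0 ≤ a i) (i : Fin n) : F a ≤ K * a i := by
  have hb : ∀ j, 0 ≤ Function.update a i 0 j := by
    intro j
    rcases eq_or_ne j i with rfl | h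
    · simp
    · simpa [Function.update_of_ne h] using ha j
  have h0 : F (Function.update a i 0) = 0 := hF.2.1 _ hb ⟨i, by simp⟩
  have hd : dist a (Function.update a i 0) ≤ a i := by
    rw [dist_pi_le_iff (ha i)]
    intro j
    rcases eq_or_ne j i with rfl | h
    · simp [Real.dist_eq, abs_of_nonneg (ha j)]
    · simpa [Function.update_of_ne h] using ha i
  have h1 : dist (F a) (F (Function.update a i 0)) ≤ K * dist a (Function.update a i 0) :=
    hK.dist_le_mul a ha _ hb
  have h2 : F a ≤ dist (F a) (F (Function.update a i 0)) := by
    rw [h0, Real.dist_eq, sub_zero]; exact le_abs_self _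
  calc F a ≤ (K : ℝ) * dist a (Function.update a i 0) := h2.trans h1
    _ ≤ K * a i := mul_le_mul_of_nonneg_left hd K.2

lemma FHyp.mono (hF : FHyp F) {a b : Fin n → ℝ} (ha : ∀ i, 0 < a i)
    (hab : ∀ i, a i ≤ b i) : F a ≤ F b := by
  have key : ∀ A : Finset (Fin n), F a ≤ F (fun i => if i ∈ A then b i else a i) := by
    intro A
    induction A using Finset.induction_on with
    | empty => simp
    | insert _ _ hj ih =>
      rename_i j A
      set g : Fin n → ℝ := fun i => if i ∈ A then b i else a i with hg
      have hgpos : ∀ i, 0 < g i := by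
        intro i
        by_cases h : i ∈ A <;> simp only [hg, h, if_true, if_false]
        · exact lt_of_lt_of_le (ha i) (hab i)
        · exact ha i
      have hgj : g j = a j := by simp [hg, hj]
      have hupd : (fun i => if i ∈ insert j A then b i else a i) = Function.update g j (b j) := by
        funext i
        rcases eq_or_ne i j with rfl | h
        · simp
        · simp [Function.update_of_ne h, hg, Finset.mem_insert, h]
      rcases eq_or_lt_of_le (hab j) with he | hlt
      · rw [hupd, ← he, ← hgj, Function.update_eq_self]
        exact ih
      · refine ih.trans ?_
        rw [hupd]
        have h3 := hF.2.2.2 g hgpos j (b j - a j) (by linarith)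
        rw [hgj] at h3
        have : a j + (b j - a j) = b j := by ring
        rw [this] at h3
        exact h3.le
  have := key Finset.univ
  simpa using this

lemma antitoneOn_Icc_of_hasDerivAt {a b : ℝ} {f f' : ℝ → ℝ}
    (hd : ∀ t ∈ Icc a b, HasDerivAt f (f' t) t)
    (hle : ∀ t ∈ Ioo a b, f' t ≤ 0) : AntitoneOn f (Icc a b) := by
  refine antitoneOn_of_hasDerivWithinAt_nonpos (f' := f') (convex_Icc a b)
    (fun t ht => (hd t ht).continuousAt.continuousWithinAt) ?_ ?_
  · intro t ht
    rw [interior_Icc] at ht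
    exact (hd t (Ioo_subset_Icc_self ht)).hasDerivWithinAt
  · intro t ht; rw [interior_Icc] at ht; exact hle t ht

lemma monotoneOn_Icc_of_hasDerivAt {a b : ℝ} {f f' : ℝ → ℝ}
    (hd : ∀ t ∈ Icc a b, HasDerivAt f (f' t) t)
    (hle : ∀ t ∈ Ioo a b, 0 ≤ f' t) : MonotoneOn f (Icc a b) := by
  refine monotoneOn_of_hasDerivWithinAt_nonneg (f' := f') (convex_Icc a b)
    (fun t ht => (hd t ht).continuousAt.continuousWithinAt) ?_ ?_
  · intro t ht
    rw [interior_Icc] at ht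
    exact (hd t (Ioo_subset_Icc_self ht)).hasDerivWithinAt
  · intro t ht; rw [interior_Icc] at ht; exact hle t ht

lemma antitoneOn_Ici_of_hasDerivAt {a : ℝ} {f f' : ℝ → ℝ}
    (hd : ∀ t ∈ Ici a, HasDerivAt f (f' t) t)
    (hle : ∀ t ∈ Ioi a, f' t ≤ 0) : AntitoneOn f (Ici a) := by
  refine antitoneOn_of_hasDerivWithinAt_nonpos (f' := f') (convex_Ici a)
    (fun t ht => (hd t ht).continuousAt.continuousWithinAt) ?_ ?_
  · intro t ht
    rw [interior_Ici] at ht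
    exact (hd t (mem_Ici.2 (le_of_lt (mem_Ioi.1 ht)))).hasDerivWithinAt
  · intro t ht; rw [interior_Ici] at ht; exact hle t ht

lemma monotoneOn_Ici_of_hasDerivAt {a : ℝ} {f f' : ℝ → ℝ}
    (hd : ∀ t ∈ Ici a, HasDerivAt f (f' t) t)
    (hle : ∀ t ∈ Ioi a, 0 ≤ f' t) : MonotoneOn f (Ici a) := by
  refine monotoneOn_of_hasDerivWithinAt_nonneg (f' := f') (convex_Ici a)
    (fun t ht => (hd t ht).continuousAt.continuousWithinAt) ?_ ?_
  · intro t ht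
    rw [interior_Ici] at ht
    exact (hd t (mem_Ici.2 (le_of_lt (mem_Ioi.1 ht)))).hasDerivWithinAt
  · intro t ht; rw [interior_Ici] at ht; exact hle t ht
end SCFaux


open SCFaux in
/-- for solutions of the limiting ODE system with positive initial
conditions there is a time `t⋆ ≥ 0` after which `F(s(t)) < D`; in particular the biomass
decays at least exponentially after time `t⋆`. -/
theorem scf_ode_eventually_decay {n : ℕ} [NeZero n] (F : (Fin n → ℝ) → ℝ) (hF : FHyp F)
    (D : ℝ) (hD : 0 < D) (y : Fin n → ℝ) (hy : ∀ i, 0 < y i)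
    (s : ℝ → Fin n → ℝ) (x : ℝ → ℝ)
    (hode_s : ∀ t : ℝ, 0 ≤ t → ∀ i,
      HasDerivAt (fun τ => s τ i) (-(1 / y i) * F (s t) * x t) t)
    (hode_x : ∀ t : ℝ, 0 ≤ t → HasDerivAt x ((-D + F (s t)) * x t) t)
    (hinit : (∀ i, 0 < s 0 i) ∧ 0 < x 0) :
    ∃ tstar : ℝ, 0 ≤ tstar ∧ (∀ t : ℝ, tstar ≤ t → F (s t) < D) ∧
      (∀ t : ℝ, tstar ≤ t → x t ≤ x tstar * Real.exp ((-D + F (s tstar)) * (t - tstar))) := by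
  obtain ⟨hs0, hx0⟩ := hinit
  obtain ⟨K, hK⟩ := hF.1
  -- ### Claim A: positivity of all components for all t ≥ 0
  have claimA : ∀ t : ℝ, 0 ≤ t → (∀ i, 0 < s t i) ∧ 0 < x t := by
    by_contra hbad
    push_neg at hbad
    obtain ⟨t₀, ht₀, hP₀⟩ := hbad
    have hP₀' : ¬ ((∀ i, 0 < s t₀ i) ∧ 0 < x t₀) :=
      fun h => absurd (hP₀ h.1) (not_le.2 h.2)
    set Bad : Set ℝ := {t | 0 ≤ t ∧ ¬ ((∀ i, 0 < s t i) ∧ 0 < x t)} with hBadDef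
    have hne : Bad.Nonempty := ⟨t₀, ht₀, hP₀'⟩
    have hbdd : BddBelow Bad := ⟨0, fun b hb => hb.1⟩
    set T := sInf Bad with hTdef
    have hT0 : 0 ≤ T := le_csInf hne fun b hb => hb.1
    have hgood : ∀ τ : ℝ, 0 ≤ τ → τ < T → (∀ i, 0 < s τ i) ∧ 0 < x τ := by
      intro τ h0 hlt
      by_contra hc
      exact absurd (csInf_le hbdd ⟨h0, hc⟩) (not_le.2 hlt)
    have hPgood : ∀ τ ∈ Ioo (0:ℝ) T, (∀ i, 0 < s τ i) ∧ 0 < x τ :=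
      fun τ h => hgood τ h.1.le h.2
    -- s i is antitone on [0, T]
    have hanti : ∀ i, AntitoneOn (fun τ => s τ i) (Icc 0 T) := by
      intro i
      refine antitoneOn_Icc_of_hasDerivAt (f' := fun τ => -(1 / y i) * F (s τ) * x τ)
        (fun t ht => hode_s t ht.1 i) ?_
      intro τ hτ
      obtain ⟨hsp, hxp⟩ := hPgood τ hτ
      have hFn : 0 ≤ F (s τ) := FHyp.nonneg hF (fun j => (hsp j).le)
      have h1 : 0 ≤ (1 / y i) * F (s τ) * x τ := by
        have := (hy i)
        positivity
      linarith
    -- x T > 0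
    have hxT : 0 < x T := by
      have hmono : MonotoneOn (fun τ => x τ * Real.exp (D * τ)) (Icc 0 T) := by
        refine monotoneOn_Icc_of_hasDerivAt
          (f' := fun τ => ((-D + F (s τ)) * x τ) * Real.exp (D * τ)
            + x τ * (Real.exp (D * τ) * D)) ?_ ?_
        · intro t ht
          have hexp : HasDerivAt (fun τ : ℝ => Real.exp (D * τ)) (Real.exp (D * t) * D) t := by
            simpa [mul_comm] using (((hasDerivAt_id t).const_mul D).exp)
          exact (hode_x t ht.1).mul hexp
        · intro τ hτ
          obtain ⟨hsp, hxp⟩ := hPgood τ hτ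
          have hFn : 0 ≤ F (s τ) := FHyp.nonneg hF (fun j => (hsp j).le)
          have hkey : ((-D + F (s τ)) * x τ) * Real.exp (D * τ)
              + x τ * (Real.exp (D * τ) * D) = F (s τ) * (x τ * Real.exp (D * τ)) := by ring
          rw [hkey]
          exact mul_nonneg hFn (by positivity)
      have h1 := hmono (left_mem_Icc.2 hT0) (right_mem_Icc.2 hT0) hT0
      simp only [mul_zero, Real.exp_zero, mul_one] at h1
      nlinarith [Real.exp_pos (D * T), hx0]
    -- upper bound for x on [0, T]
    set C : ℝ := K * s 0 0 with hCdef
    have hC : 0 ≤ C := by rw [hCdef]; exact mul_nonneg K.2 (hs0 0).le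
    set X : ℝ := x 0 * Real.exp (C * T) with hXdef
    have hxle : ∀ τ ∈ Icc (0:ℝ) T, x τ ≤ X := by
      have hanti2 : AntitoneOn (fun τ => x τ * Real.exp ((D - C) * τ)) (Icc 0 T) := by
        refine antitoneOn_Icc_of_hasDerivAt
          (f' := fun τ => ((-D + F (s τ)) * x τ) * Real.exp ((D - C) * τ)
            + x τ * (Real.exp ((D - C) * τ) * (D - C))) ?_ ?_
        · intro t ht
          have hexp : HasDerivAt (fun τ : ℝ => Real.exp ((D - C) * τ))
              (Real.exp ((D - C) * t) * (D - C)) t := by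
            simpa [mul_comm] using (((hasDerivAt_id t).const_mul (D - C)).exp)
          exact (hode_x t ht.1).mul hexp
        · intro τ hτ
          obtain ⟨hsp, hxp⟩ := hPgood τ hτ
          have hFle : F (s τ) ≤ C := by
            have h1 : F (s τ) ≤ K * s τ 0 := FHyp.le_K_mul hF hK (fun j => (hsp j).le) 0
            have h2 : s τ 0 ≤ s 0 0 :=
              hanti 0 (left_mem_Icc.2 hT0) (Ioo_subset_Icc_self hτ) hτ.1.le
            calc F (s τ) ≤ K * s τ 0 := h1
              _ ≤ K * s 0 0 := by
                  exact mul_le_mul_of_nonneg_left h2 K.2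
          have hkey : ((-D + F (s τ)) * x τ) * Real.exp ((D - C) * τ)
              + x τ * (Real.exp ((D - C) * τ) * (D - C))
              = (F (s τ) - C) * (x τ * Real.exp ((D - C) * τ)) := by ring
          rw [hkey]
          apply mul_nonpos_of_nonpos_of_nonneg (by linarith)
          positivity
      intro τ hτ
      have h1 := hanti2 (left_mem_Icc.2 hT0) hτ hτ.1
      simp only [mul_zero, Real.exp_zero, mul_one] at h1
      have h2 : x τ = x τ * Real.exp ((D - C) * τ) * Real.exp (-((D - C) * τ)) := by
        rw [mul_assoc, ← Real.exp_add, add_neg_cancel, Real.exp_zero, mul_one]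
      rw [h2]
      calc x τ * Real.exp ((D - C) * τ) * Real.exp (-((D - C) * τ))
          ≤ x 0 * Real.exp (-((D - C) * τ)) :=
            mul_le_mul_of_nonneg_right h1 (Real.exp_pos _).le
        _ ≤ x 0 * Real.exp (C * T) := by
            apply mul_le_mul_of_nonneg_left _ hx0.le
            apply Real.exp_le_exp.2
            nlinarith [hτ.1, hτ.2, hD, hC]
    have hX : 0 ≤ X := by rw [hXdef]; exact mul_nonneg hx0.le (Real.exp_pos _).le
    -- s T i > 0 for each i
    have hsT : ∀ i, 0 < s T i := by
      intro i
      set c : ℝ := K * X / y i with hcdef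
      have hc : 0 ≤ c := by
        have := hy i
        positivity
      have hmono : MonotoneOn (fun τ => s τ i * Real.exp (c * τ)) (Icc 0 T) := by
        refine monotoneOn_Icc_of_hasDerivAt
          (f' := fun τ => (-(1 / y i) * F (s τ) * x τ) * Real.exp (c * τ)
            + s τ i * (Real.exp (c * τ) * c)) ?_ ?_
        · intro t ht
          have hexp : HasDerivAt (fun τ : ℝ => Real.exp (c * τ)) (Real.exp (c * t) * c) t := by
            simpa [mul_comm] using (((hasDerivAt_id t).const_mul c).exp)
          exact (hode_s t ht.1 i).mul hexp
        · intro τ hτ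
          obtain ⟨hsp, hxp⟩ := hPgood τ hτ
          have hyi := hy i
          have hF1 : F (s τ) ≤ K * s τ i := FHyp.le_K_mul hF hK (fun j => (hsp j).le) i
          have hFn : 0 ≤ F (s τ) := FHyp.nonneg hF (fun j => (hsp j).le)
          have hxX : x τ ≤ X := hxle τ (Ioo_subset_Icc_self hτ)
          have hFx : F (s τ) * x τ ≤ K * s τ i * X := by
            calc F (s τ) * x τ ≤ (K * s τ i) * x τ :=
                mul_le_mul_of_nonneg_right hF1 hxp.le
              _ ≤ (K * s τ i) * X := by
                  exact mul_le_mul_of_nonneg_left hxX (mul_nonneg K.2 (hsp i).le)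
          have hkey : (-(1 / y i) * F (s τ) * x τ) * Real.exp (c * τ)
              + s τ i * (Real.exp (c * τ) * c)
              = (Real.exp (c * τ) / y i) * (K * X * s τ i - F (s τ) * x τ) := by
            rw [hcdef]; field_simp; ring
          rw [hkey]
          apply mul_nonneg (div_nonneg (Real.exp_pos _).le (hy i).le)
          nlinarith [hsp i]
      have h1 := hmono (left_mem_Icc.2 hT0) (right_mem_Icc.2 hT0) hT0
      simp only [mul_zero, Real.exp_zero, mul_one] at h1
      nlinarith [Real.exp_pos (c * T), hs0 i]
    -- so the state is positive at T; by continuity it is positive just after T, contradiction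
    have hPT : (∀ i, 0 < s T i) ∧ 0 < x T := ⟨hsT, hxT⟩
    have hev : ∀ᶠ t in 𝓝 T, (∀ i, 0 < s t i) ∧ 0 < x t := by
      have h1 : ∀ᶠ t in 𝓝 T, ∀ i, 0 < s t i := by
        rw [eventually_all]
        intro i
        exact (hode_s T hT0 i).continuousAt.eventually (eventually_gt_nhds (hsT i))
      have h2 : ∀ᶠ t in 𝓝 T, 0 < x t :=
        (hode_x T hT0).continuousAt.eventually (eventually_gt_nhds hxT)
      exact h1.and h2
    obtain ⟨ε, hε, hball⟩ := Metric.eventually_nhds_iff.1 hev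
    obtain ⟨b, hbBad, hblt⟩ := (csInf_lt_iff hbdd hne).1 (by linarith : sInf Bad < T + ε)
    have hbT : T ≤ b := csInf_le hbdd hbBad
    exact hbBad.2 (hball (by rw [Real.dist_eq, abs_of_nonneg (by linarith)]; linarith))
  -- ### global consequences
  have hspos : ∀ t : ℝ, 0 ≤ t → ∀ i, 0 < s t i := fun t ht => (claimA t ht).1
  have hxpos : ∀ t : ℝ, 0 ≤ t → 0 < x t := fun t ht => (claimA t ht).2
  have hFnn : ∀ t : ℝ, 0 ≤ t → 0 ≤ F (s t) :=
    fun t ht => FHyp.nonneg hF (fun j => (hspos t ht j).le)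
  -- each s i is antitone on [0, ∞)
  have hanti : ∀ i, AntitoneOn (fun τ => s τ i) (Ici 0) := by
    intro i
    refine antitoneOn_Ici_of_hasDerivAt (f' := fun τ => -(1 / y i) * F (s τ) * x τ)
      (fun t ht => hode_s t ht i) ?_
    intro τ hτ
    have h1 : 0 ≤ (1 / y i) * F (s τ) * x τ := by
      have := hy i
      have := hFnn τ (le_of_lt hτ)
      have := hxpos τ (le_of_lt hτ)
      positivity
    linarith
  -- limits of s i
  have key : ∀ i : Fin n, ∃ L : ℝ, 0 ≤ L ∧ Tendsto (fun t => s t i) atTop (𝓝 L) ∧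
      ∀ t : ℝ, 0 ≤ t → L ≤ s t i := by
    intro i
    set g : ℝ → ℝ := fun t => s (max t 0) i with hg
    have hga : Antitone g := fun a b hab =>
      hanti i (le_max_right a 0) (le_max_right b 0) (max_le_max hab le_rfl)
    have hgb : BddBelow (range g) :=
      ⟨0, by rintro v ⟨t, rfl⟩; exact (hspos _ (le_max_right t 0) i).le⟩
    refine ⟨⨅ t, g t, le_ciInf fun t => (hspos _ (le_max_right t 0) i).le, ?_, ?_⟩
    · have h1 : Tendsto g atTop (𝓝 (⨅ t, g t)) := tendsto_atTop_ciInf hga hgb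
      refine h1.congr' ?_
      filter_upwards [eventually_ge_atTop (0:ℝ)] with t ht
      show s (max t 0) i = s t i
      rw [max_eq_left ht]
    · intro t ht
      have h2 : (⨅ t, g t) ≤ g t := ciInf_le hgb t
      have h3 : g t = s t i := by show s (max t 0) i = s t i; rw [max_eq_left ht]
      rwa [h3] at h2
  choose σ hσ_nonneg hσ_tendsto hσ_le' using key
  have hσ_le : ∀ t : ℝ, 0 ≤ t → ∀ i, σ i ≤ s t i := fun t ht i => hσ_le' i t ht
  -- F (s t) → F σ
  have hFs_tendsto : Tendsto (fun t => F (s t)) atTop (𝓝 (F σ)) := by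
    have h1 : Tendsto s atTop (𝓝 σ) := tendsto_pi_nhds.2 hσ_tendsto
    have h2 : Tendsto (fun t => dist (s t) σ) atTop (𝓝 0) := by
      simpa using h1.dist (tendsto_const_nhds (x := σ))
    rw [tendsto_iff_dist_tendsto_zero]
    refine squeeze_zero' (g := fun t => (K : ℝ) * dist (s t) σ)
      (Eventually.of_forall fun t => dist_nonneg) ?_ ?_
    · filter_upwards [eventually_ge_atTop (0:ℝ)] with t ht
      exact hK.dist_le_mul (s t) (fun j => (hspos t ht j).le) σ hσ_nonneg
    · simpa using h2.const_mul (K : ℝ)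
  -- F σ < D
  have hFσ_lt : F σ < D := by
    by_contra hge
    push_neg at hge
    have hσpos : ∀ i, 0 < σ i := by
      intro i
      rcases lt_or_eq_of_le (hσ_nonneg i) with h | h
      · exact h
      · exfalso
        have : F σ = 0 := hF.2.1 σ hσ_nonneg ⟨i, h.symm⟩
        linarith
    have hFD : ∀ t : ℝ, 0 ≤ t → D ≤ F (s t) :=
      fun t ht => hge.trans (FHyp.mono hF hσpos (hσ_le t ht))
    have hxmono : MonotoneOn x (Ici 0) := by
      refine monotoneOn_Ici_of_hasDerivAt (f' := fun t => (-D + F (s t)) * x t)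
        (fun t ht => hode_x t ht) ?_
      intro τ hτ
      have h1 := hFD τ (le_of_lt hτ)
      have h2 := hxpos τ (le_of_lt hτ)
      nlinarith
    have hxge : ∀ t : ℝ, 0 ≤ t → x 0 ≤ x t := fun t ht => hxmono self_mem_Ici ht ht
    -- W t + D * x 0 * t is antitone, but W > 0, contradiction
    have hWanti : AntitoneOn (fun t => y 0 * s t 0 + x t + D * x 0 * t) (Ici 0) := by
      refine antitoneOn_Ici_of_hasDerivAt
        (f' := fun t => y 0 * (-(1 / y 0) * F (s t) * x t) + (-D + F (s t)) * x t + D * x 0)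
        ?_ ?_
      · intro t ht
        have hlin : HasDerivAt (fun τ : ℝ => D * x 0 * τ) (D * x 0) t := by
          simpa using (hasDerivAt_id t).const_mul (D * x 0)
        exact (((hode_s t ht 0).const_mul (y 0)).add (hode_x t ht)).add hlin
      · intro τ hτ
        have hy0 : y 0 ≠ 0 := (hy 0).ne'
        have h1 : y 0 * (-(1 / y 0) * F (s τ) * x τ) = -(F (s τ) * x τ) := by
          field_simp
        rw [h1]
        have h2 := hxge τ (le_of_lt hτ)
        nlinarith
    set t₁ : ℝ := (y 0 * s 0 0 + x 0) / (D * x 0) + 1 with ht₁def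
    have hDx : 0 < D * x 0 := by positivity
    have ht₁pos : 0 < t₁ := by
      have hnum : 0 ≤ y 0 * s 0 0 + x 0 := by nlinarith [hy 0, hs0 0, hx0]
      have := div_nonneg hnum hDx.le
      rw [ht₁def]; linarith
    have h3 := hWanti self_mem_Ici (le_of_lt ht₁pos) (le_of_lt ht₁pos)
    simp only [mul_zero, add_zero] at h3
    have h4 : 0 < y 0 * s t₁ 0 + x t₁ := by
      have := hspos t₁ (le_of_lt ht₁pos) 0
      have := hxpos t₁ (le_of_lt ht₁pos)
      have := hy 0
      positivity
    have h5 : D * x 0 * t₁ = y 0 * s 0 0 + x 0 + D * x 0 := by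
      rw [ht₁def]; field_simp
    nlinarith
  -- choose tstar
  have hev : ∀ᶠ t in atTop, F (s t) < D := hFs_tendsto.eventually (eventually_lt_nhds hFσ_lt)
  obtain ⟨a, ha⟩ := eventually_atTop.1 hev
  refine ⟨max a 0, le_max_right a 0, fun t ht => ha t ((le_max_left a 0).trans ht), ?_⟩
  set tstar : ℝ := max a 0 with htstardef
  have htstar0 : 0 ≤ tstar := le_max_right a 0
  set c : ℝ := -D + F (s tstar) with hcdef
  have hFle : ∀ τ : ℝ, tstar ≤ τ → F (s τ) ≤ F (s tstar) := by
    intro τ hτ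
    exact FHyp.mono hF (hspos τ (htstar0.trans hτ))
      (fun i => hanti i htstar0 (htstar0.trans hτ) hτ)
  have hanti3 : AntitoneOn (fun τ => x τ * Real.exp (-c * τ)) (Ici tstar) := by
    refine antitoneOn_Ici_of_hasDerivAt
      (f' := fun τ => ((-D + F (s τ)) * x τ) * Real.exp (-c * τ)
        + x τ * (Real.exp (-c * τ) * (-c))) ?_ ?_
    · intro t ht
      have hexp : HasDerivAt (fun τ : ℝ => Real.exp (-c * τ)) (Real.exp (-c * t) * (-c)) t := by
        simpa [mul_comm] using (((hasDerivAt_id t).const_mul (-c)).exp)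
      exact (hode_x t (htstar0.trans ht)).mul hexp
    · intro τ hτ
      have hτ0 : 0 ≤ τ := htstar0.trans (le_of_lt hτ)
      have h1 : F (s τ) ≤ F (s tstar) := hFle τ (le_of_lt hτ)
      have h2 := hxpos τ hτ0
      have hkey : ((-D + F (s τ)) * x τ) * Real.exp (-c * τ)
          + x τ * (Real.exp (-c * τ) * (-c))
          = (F (s τ) - F (s tstar)) * (x τ * Real.exp (-c * τ)) := by
        rw [hcdef]; ring
      rw [hkey]
      apply mul_nonpos_of_nonpos_of_nonneg (by linarith)
      positivity
  intro t ht
  have h1 := hanti3 self_mem_Ici ht ht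
  have h2 : x t = x t * Real.exp (-c * t) * Real.exp (c * t) := by
    rw [mul_assoc, ← Real.exp_add, neg_mul, neg_add_cancel, Real.exp_zero, mul_one]
  rw [h2]
  calc x t * Real.exp (-c * t) * Real.exp (c * t)
      ≤ x tstar * Real.exp (-c * tstar) * Real.exp (c * t) :=
        mul_le_mul_of_nonneg_right h1 (Real.exp_pos _).le
    _ = x tstar * Real.exp ((-D + F (s tstar)) * (t - tstar)) := by
        rw [mul_assoc, ← Real.exp_add, hcdef]
        ring_nf
end
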